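/- The ordered disjunction operator is associative up to HT-equivalence: for all formulas F, G, H, the formula F × (G × H) is HT-equivalent to (F × G) × H. -/
import Mathlib


inductive Form (α : Type) : Type
  | atom : α → Form α
  | fls  : Form α
  | and  : Form α → Form α → Form α
  | or   : Form α → Form α → Form α
  | imp  : Form α → Form α → Form α

namespace Form

variable {α : Type}

/-- ¬F abbreviates F → ⊥ -/
def neg (F : Form α) : Form α := imp F fls

/-- ⊤ abbreviates ⊥ → ⊥ -/
def tru : Form α := imp fls fls

/-- ordered disjunction F × G := F ∨ (¬F ∧ G) -/
def ox (F G : Form α) : Form α := or F (and (neg F) G)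

/-- classical satisfaction -/
def csat (T : Set α) : Form α → Prop
  | atom p  => p ∈ T
  | fls     => False
  | and F G => csat T F ∧ csat T G
  | or F G  => csat T F ∨ csat T G
  | imp F G => csat T F → csat T G

/-- here-and-there satisfaction (for interpretations ⟨H,T⟩ with H ⊆ T) -/
def htsat (H T : Set α) : Form α → Prop
  | atom p  => p ∈ H
  | fls     => False
  | and F G => htsat H T F ∧ htsat H T G
  | or F G  => htsat H T F ∨ htsat H T G
  | imp F G => (csat T F → csat T G) ∧ (¬ htsat H T F ∨ htsat H T G)

end Form

/-- HT-equivalence: satisfied by exactly the same HT-interpretations -/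
def HTEquiv {α : Type} (F G : Form α) : Prop :=
  ∀ H T : Set α, H ⊆ T → (Form.htsat H T F ↔ Form.htsat H T G)

/-- ⟨T,T⟩ is an equilibrium model of the theory Γ -/
def EqModel {α : Type} (Γ : Set (Form α)) (T : Set α) : Prop :=
  (∀ F ∈ Γ, Form.htsat T T F) ∧ ∀ H : Set α, H ⊂ T → ¬ (∀ F ∈ Γ, Form.htsat H T F)

/-- iterated ordered disjunction, associated to the left; ⊥ when empty -/
def oxList {α : Type} : List (Form α) → Form α
  | []      => Form.fls
  | a :: as => as.foldl Form.ox a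

/-- iterated disjunction, associated to the left; ⊥ when empty -/
def orList {α : Type} : List (Form α) → Form α
  | []      => Form.fls
  | a :: as => as.foldl Form.or a

/-- iterated conjunction, associated to the left; ⊤ when empty -/
def andList {α : Type} : List (Form α) → Form α
  | []      => Form.tru
  | a :: as => as.foldl Form.and a


theorem Form.htsat_csat {α : Type} {H T : Set α} (hs : H ⊆ T) :
    ∀ F : Form α, Form.htsat H T F → Form.csat T F := by
  intro F
  induction F with
  | atom p => exact fun h => hs h
  | fls => exact id
  | and F G ihF ihG => exact fun ⟨a,b⟩ => ⟨ihF a, ihG b⟩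
  | or F G ihF ihG => exact fun h => h.elim (fun a => Or.inl (ihF a)) (fun b => Or.inr (ihG b))
  | imp F G ihF ihG => exact fun h => h.1

theorem ox_associative {α : Type} (F G K : Form α) :
    HTEquiv (Form.ox F (Form.ox G K)) (Form.ox (Form.ox F G) K) := by
  intro H T hs
  have hF := Form.htsat_csat hs F
  have hG := Form.htsat_csat hs G
  have hK := Form.htsat_csat hs K
  simp only [Form.ox, Form.neg, Form.htsat, Form.csat]
  tauto
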